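/- Define R̃⁽¹⁾(x, x₁) = g₁(x, x₁) with g₁(x,y) = 4x²y² + x + y², and inductively R̃⁽ⁿ⁾(x, xₙ) = Res_{x_{n-1}}(R̃⁽ⁿ⁻¹⁾(x, x_{n-1}), g₁(x_{n-1}, xₙ)). Then for every n ≥ 1, the reduction of R̃⁽ⁿ⁾(x, xₙ) modulo 2 equals xₙ^(2ⁿ) + x in 𝔽₂[x, xₙ]. -/

import Mathlib

open Polynomial

/-- The Sylvester-style matrix of two polynomials `p, q`, with `n` shifted rows of
coefficients of `p` and `m` shifted rows of coefficients of `q`. -/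
noncomputable def sylvesterMatrix {R : Type*} [CommRing R] (p q : R[X]) (m n : ℕ) :
    Matrix (Fin (n + m)) (Fin (n + m)) R := fun i j =>
  if (i : ℕ) < n then
    (if (i : ℕ) ≤ (j : ℕ) then p.coeff ((j : ℕ) - (i : ℕ)) else 0)
  else
    (if (i : ℕ) - n ≤ (j : ℕ) then q.coeff ((j : ℕ) - ((i : ℕ) - n)) else 0)

/-- The resultant of two polynomials, as the determinant of their Sylvester matrix. -/
noncomputable def resultant {R : Type*} [CommRing R] (p q : R[X]) : R :=
  (sylvesterMatrix p q p.natDegree q.natDegree).det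

/-- `g₁(t, y) = 4t²y² + t + y²`, viewed as a polynomial in `t` with coefficients in
`(ℤ[x])[y]` (the variable `x` does not occur). -/
noncomputable def g1t : Polynomial (Polynomial (Polynomial ℤ)) :=
  C (4 * (X : Polynomial (Polynomial ℤ)) ^ 2) * X ^ 2 + X +
    C ((X : Polynomial (Polynomial ℤ)) ^ 2)

/-- The iterated resultants `R̃⁽ⁿ⁾(x, xₙ)`, as polynomials in `xₙ` with coefficients in
`ℤ[x]`.  `Rtilde 1 = g₁(x, x₁) = (4x²+1)x₁² + x`, and
`Rtilde (n+1) = Res_{t}(Rtilde n (x, t), g₁(t, x_{n+1}))`. -/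
noncomputable def Rtilde : ℕ → Polynomial (Polynomial ℤ)
  | 0 => 1
  | 1 => C (4 * (X : Polynomial ℤ) ^ 2 + 1) * X ^ 2 + C (X : Polynomial ℤ)
  | (n + 2) => _root_.resultant ((Rtilde (n + 1)).map (C : Polynomial ℤ →+* Polynomial (Polynomial ℤ))) g1t

/-! ### Auxiliary matrices and determinants -/

/-- Auxiliary matrix: row 0 has `a` at column 0 and `1` at column `d`; row `i ≥ 1` has
`b` at column `i-1` and `1` at column `i`. -/
noncomputable def Amat {R : Type*} [CommRing R] (d : ℕ) (a b : R) :
    Matrix (Fin (d+1)) (Fin (d+1)) R :=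
  fun i j =>
    if (i : ℕ) = 0 then (if (j : ℕ) = 0 then a else if (j : ℕ) = d then 1 else 0)
    else (if (j : ℕ) + 1 = (i : ℕ) then b else if (j : ℕ) = (i : ℕ) then 1 else 0)

lemma Amat_det {R : Type*} [CommRing R] (d : ℕ) (hd : 1 ≤ d) (a b : R) :
    (Amat d a b).det = a + (-1) ^ d * b ^ d := by
  rw [Matrix.det_succ_row_zero]
  have hz : ∀ j ∈ (Finset.univ : Finset (Fin (d+1))), j ∉ ({0, Fin.last d} : Finset (Fin (d+1))) →
      (-1 : R) ^ (j : ℕ) * Amat d a b 0 j * ((Amat d a b).submatrix Fin.succ j.succAbove).det = 0 := by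
    intro j _ hj
    simp only [Finset.mem_insert, Finset.mem_singleton] at hj
    push_neg at hj
    have h1 : (j : ℕ) ≠ 0 := fun h => hj.1 (Fin.ext (by simpa using h))
    have h2 : (j : ℕ) ≠ d := fun h => hj.2 (Fin.ext (by simpa [Fin.val_last] using h))
    have : Amat d a b 0 j = 0 := by simp [Amat, h1, h2]
    rw [this]; ring
  rw [← Finset.sum_subset (Finset.subset_univ ({0, Fin.last d} : Finset (Fin (d+1)))) hz]
  have h0l : (0 : Fin (d+1)) ≠ Fin.last d := by
    intro h
    have := congrArg Fin.val h
    simp [Fin.val_last] at this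
    omega
  rw [Finset.sum_pair h0l]
  have e1 : ((Amat d a b).submatrix Fin.succ ((0 : Fin (d+1)).succAbove)).det = 1 := by
    rw [Fin.succAbove_zero]
    rw [Matrix.det_of_lowerTriangular]
    · apply Finset.prod_eq_one
      intro i _
      simp only [Matrix.submatrix_apply, Amat, Fin.val_succ]
      split_ifs <;> first | rfl | (exact False.elim ‹False›) | (exfalso; omega)
    · intro i j hij
      have hij' : (i : ℕ) < (j : ℕ) := by simpa using hij
      simp only [Matrix.submatrix_apply, Amat, Fin.val_succ]
      split_ifs <;> first | rfl | (exact False.elim ‹False›) | (exfalso; omega)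
  have e2 : ((Amat d a b).submatrix Fin.succ ((Fin.last d).succAbove)).det = b ^ d := by
    rw [Fin.succAbove_last]
    rw [Matrix.det_of_upperTriangular]
    · have h : ∀ i : Fin d, (Amat d a b).submatrix Fin.succ Fin.castSucc i i = b := by
        intro i
        simp only [Matrix.submatrix_apply, Amat, Fin.val_succ, Fin.coe_castSucc]
        split_ifs <;> first | rfl | (exact False.elim ‹False›) | (exfalso; omega)
      calc (∏ i : Fin d, (Amat d a b).submatrix Fin.succ Fin.castSucc i i)
          = ∏ _i : Fin d, b := Finset.prod_congr rfl (fun i _ => h i)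
        _ = b ^ d := by simp
    · intro i j hij
      have hij' : (j : ℕ) < (i : ℕ) := by simpa using hij
      simp only [Matrix.submatrix_apply, Amat, Fin.val_succ, Fin.coe_castSucc]
      split_ifs <;> first | rfl | (exact False.elim ‹False›) | (exfalso; omega)
  have v0 : Amat d a b 0 0 = a := by simp [Amat]
  have vl : Amat d a b 0 (Fin.last d) = 1 := by
    simp only [Amat, Fin.val_last, Fin.val_zero]
    split_ifs <;> first | rfl | (exact False.elim ‹False›) | (exfalso; omega)
  rw [e1, e2, v0, vl]
  simp [Fin.val_last]
  try ring

lemma coeff_pow_add_C {R : Type*} [CommRing R] (d : ℕ) (hd : 1 ≤ d) (a : R) (k : ℕ) :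
    (X ^ d + C a).coeff k = if k = 0 then a else if k = d then 1 else 0 := by
  simp only [coeff_add, coeff_X_pow, coeff_C]
  split_ifs <;> first | rfl | ring1 | (exfalso; omega)

lemma coeff_X_add_C {R : Type*} [CommRing R] (b : R) (k : ℕ) :
    (X + C b).coeff k = if k = 0 then b else if k = 1 then 1 else 0 := by
  simp only [coeff_add, coeff_X, coeff_C]
  split_ifs <;> first | rfl | ring1 | (exfalso; omega)

lemma syl_det {R : Type*} [CommRing R] (d : ℕ) (hd : 1 ≤ d) (a b : R) :
    (sylvesterMatrix (X ^ d + C a) (X + C b) d 2).det = (-1) ^ d * a + b ^ d := by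
  have h2d : 2 + d = (d + 1) + 1 := by omega
  set M := sylvesterMatrix (X ^ d + C a) (X + C b) d 2 with hM
  set N := (Matrix.reindex (finCongr h2d) (finCongr h2d)) M with hNdef
  have hdet : M.det = N.det := (Matrix.det_reindex_self _ _).symm
  have hN : ∀ i j : Fin (d+1+1), N i j =
      if (i : ℕ) < 2 then
        (if (i : ℕ) ≤ (j : ℕ) then
          (if (j : ℕ) - (i : ℕ) = 0 then a else if (j : ℕ) - (i : ℕ) = d then 1 else 0) else 0)
      else
        (if (i : ℕ) - 2 ≤ (j : ℕ) then
          (if (j : ℕ) - ((i : ℕ) - 2) = 0 then b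
            else if (j : ℕ) - ((i : ℕ) - 2) = 1 then 1 else 0) else 0) := by
    intro i j
    rw [hNdef, hM]
    simp only [Matrix.reindex_apply, Matrix.submatrix_apply, sylvesterMatrix,
      finCongr_symm, finCongr_apply, Fin.coe_cast]
    rw [coeff_pow_add_C d hd, coeff_X_add_C]
  rw [hdet, Matrix.det_succ_column _ (Fin.last (d+1))]
  rw [Finset.sum_eq_single_of_mem (⟨1, by omega⟩ : Fin (d+1+1)) (Finset.mem_univ _) ?side]
  case side =>
    intro i _ hi
    have hi' : (i : ℕ) ≠ 1 := fun h => hi (Fin.ext (by simpa using h))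
    have hz : N i (Fin.last (d+1)) = 0 := by
      rw [hN]
      simp only [Fin.val_last]
      have hiv : (i : ℕ) < d + 2 := i.isLt
      split_ifs <;> first | rfl | (exfalso; omega)
    rw [hz]; ring
  · have hval : N (⟨1, by omega⟩ : Fin (d+1+1)) (Fin.last (d+1)) = 1 := by
      rw [hN]
      have hone : ((⟨1, by omega⟩ : Fin (d+1+1)) : ℕ) = 1 := rfl
      simp only [Fin.val_last, hone]
      split_ifs <;> first | rfl | (exfalso; omega)
    have hminor : N.submatrix ((⟨1, by omega⟩ : Fin (d+1+1)).succAbove)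
        ((Fin.last (d+1)).succAbove) = Amat d a b := by
      ext i j
      have hcol : (((Fin.last (d+1)).succAbove j : Fin (d+1+1)) : ℕ) = (j : ℕ) := by
        rw [Fin.succAbove_last]; simp
      have hrow : (((⟨1, by omega⟩ : Fin (d+1+1)).succAbove i : Fin (d+1+1)) : ℕ) =
          if (i : ℕ) = 0 then 0 else (i : ℕ) + 1 := by
        rw [Fin.succAbove]
        by_cases h : (i : ℕ) = 0
        · rw [if_pos (by simp [Fin.lt_def, h])]
          simp [h]
        · rw [if_neg (by simp only [Fin.lt_def, Fin.coe_castSucc, Fin.val_mk]; omega)]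
          simp [Fin.val_succ, h]
      rw [Matrix.submatrix_apply, hN]
      rw [hcol, hrow, Amat]
      have hiv : (i : ℕ) < d + 1 := i.isLt
      have hjv : (j : ℕ) < d + 1 := j.isLt
      split_ifs <;> first | rfl | (exfalso; omega)
    rw [hval, hminor, Amat_det d hd]
    have hsgn : ((-1 : R)) ^ (((⟨1, by omega⟩ : Fin (d+1+1)) : ℕ) + ((Fin.last (d+1)) : ℕ))
        = (-1) ^ d := by
      simp only [Fin.val_last]
      rw [show (1 : ℕ) + (d + 1) = d + 2 by omega, pow_succ, pow_succ]
      ring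
    rw [hsgn]
    have hm : ((-1 : R)) ^ (d * 2) = 1 := by
      rw [mul_comm, pow_mul]
      norm_num
    rw [mul_one, mul_comm]
    ring_nf
    rw [hm]
    ring

lemma natDegree_det_le' {S : Type*} [CommRing S] {n : ℕ} (M : Matrix (Fin n) (Fin n) S[X])
    (f : Fin n → ℕ) (h : ∀ i j, (M i j).natDegree ≤ f i) :
    M.det.natDegree ≤ ∑ i, f i := by
  rw [Matrix.det_apply]
  apply natDegree_sum_le_of_forall_le
  intro σ _
  have hs : (Equiv.Perm.sign σ) • (∏ i, M (σ i) i) =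
      (((Equiv.Perm.sign σ : ℤ) : S[X])) * ∏ i, M (σ i) i := by
    rw [Units.smul_def, zsmul_eq_mul]
  rw [hs]
  refine le_trans (natDegree_mul_le) ?_
  rw [natDegree_intCast, zero_add]
  refine le_trans (natDegree_prod_le _ _) ?_
  refine le_trans (Finset.sum_le_sum (fun i _ => h (σ i) i)) ?_
  rw [Equiv.sum_comp σ f]

lemma sylvesterMatrix_map {R S : Type*} [CommRing R] [CommRing S] (f : R →+* S)
    (p q : R[X]) (m n : ℕ) :
    f.mapMatrix (sylvesterMatrix p q m n) = sylvesterMatrix (p.map f) (q.map f) m n := by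
  ext i j
  simp [sylvesterMatrix, apply_ite f, coeff_map]


lemma two_poly_eq_zero {A : Type*} [CommRing A] (h : (2 : A) = 0) : (2 : A[X]) = 0 := by
  rw [← map_ofNat (C : A →+* A[X]) 2, show ((OfNat.ofNat 2) : A) = 0 from h, map_zero]

lemma four_eq_zero {A : Type*} [CommRing A] (h : (2 : A) = 0) : (4 : A) = 0 := by
  rw [show (4 : A) = 2 * 2 by norm_num, h, mul_zero]

lemma two_z2x : (2 : Polynomial (ZMod 2)) = 0 :=
  two_poly_eq_zero (by decide)

lemma two_z2xy : (2 : Polynomial (Polynomial (ZMod 2))) = 0 :=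
  two_poly_eq_zero two_z2x

lemma g1t_natDegree : g1t.natDegree = 2 := by
  unfold g1t
  compute_degree!

lemma g1t_coeff_natDegree (k : ℕ) : (g1t.coeff k).natDegree ≤ 2 := by
  unfold g1t
  simp only [coeff_add, coeff_C_mul, coeff_X_pow, coeff_X, coeff_C]
  rcases Nat.lt_or_ge k 3 with h | h
  · interval_cases k <;> simp <;> compute_degree
  · have h1 : k ≠ 0 := by omega
    have h2 : ¬ (k = 2) := by omega
    have h3 : ¬ ((1 : ℕ) = k) := by omega
    simp [h1, h2, h3]

noncomputable def Rt1 : Polynomial (Polynomial ℤ) :=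
  C (4 * (X : Polynomial ℤ) ^ 2 + 1) * X ^ 2 + C (X : Polynomial ℤ)

lemma Rt1_natDegree : Rt1.natDegree = 2 := by
  unfold Rt1
  compute_degree!
  intro h
  simpa using congrArg (fun p => Polynomial.coeff p 0) h

lemma Rt1_map : Rt1.map (Polynomial.mapRingHom (Int.castRingHom (ZMod 2))) =
    (X : Polynomial (Polynomial (ZMod 2))) ^ 2 + C (X : Polynomial (ZMod 2)) := by
  unfold Rt1
  have h4 : ((Polynomial.mapRingHom (Int.castRingHom (ZMod 2))) (4 * (X : Polynomial ℤ) ^ 2 + 1))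
      = 1 := by
    simp only [map_add, map_mul, map_one, map_pow, coe_mapRingHom, map_X, Polynomial.map_ofNat]
    rw [four_eq_zero two_z2x]
    ring
  rw [Polynomial.map_add, Polynomial.map_mul, Polynomial.map_C, Polynomial.map_C, h4,
    Polynomial.map_pow, map_X]
  simp [coe_mapRingHom]

lemma g1t_map : g1t.map (Polynomial.mapRingHom (Polynomial.mapRingHom (Int.castRingHom (ZMod 2)))) =
    X + C ((X : Polynomial (Polynomial (ZMod 2))) ^ 2) := by
  unfold g1t
  have h4 : (Polynomial.mapRingHom (Polynomial.mapRingHom (Int.castRingHom (ZMod 2))))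
      (4 * (X : Polynomial (Polynomial ℤ)) ^ 2) = 0 := by
    simp only [map_mul, map_pow, coe_mapRingHom, map_X, Polynomial.map_ofNat]
    rw [four_eq_zero two_z2xy]
    ring
  rw [Polynomial.map_add, Polynomial.map_add, Polynomial.map_mul, Polynomial.map_C,
    Polynomial.map_C, h4, map_X]
  simp [coe_mapRingHom]

lemma sum_aux (nn : ℕ) : ∀ m : ℕ, (∑ i : Fin (nn + m), if (i : ℕ) < nn then 0 else 2) = 2 * m := by
  intro m
  induction m with
  | zero =>
    apply Finset.sum_eq_zero
    intro i _
    simp [i.isLt]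
  | succ m ih =>
    show (∑ i : Fin ((nn + m) + 1), if (i : ℕ) < nn then 0 else 2) = 2 * (m + 1)
    rw [Fin.sum_univ_castSucc]
    have h1 : ∀ i : Fin (nn + m),
        (if ((Fin.castSucc i : Fin (nn + m + 1)) : ℕ) < nn then 0 else 2)
          = if (i : ℕ) < nn then 0 else 2 := by
      intro i; simp [Fin.coe_castSucc]
    rw [Finset.sum_congr rfl (fun i _ => h1 i), ih]
    have : ¬ (((Fin.last (nn + m)) : ℕ) < nn) := by
      simp only [Fin.val_last]
      omega
    rw [if_neg this]
    ring

lemma Rtilde_one : Rtilde 1 = Rt1 := rfl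

lemma key (n : ℕ) (hn : 1 ≤ n) :
    (Rtilde n).natDegree = 2 ^ n ∧
    (Rtilde n).map (Polynomial.mapRingHom (Int.castRingHom (ZMod 2))) =
      (X : Polynomial (Polynomial (ZMod 2))) ^ (2 ^ n) + C (X : Polynomial (ZMod 2)) := by
  induction n with
  | zero => omega
  | succ m IH =>
    match m, IH with
    | 0, _ =>
      rw [Rtilde_one]
      exact ⟨Rt1_natDegree, Rt1_map⟩
    | (k+1), IH =>
      obtain ⟨hdeg, hmap⟩ := IH (by omega)
      set d : ℕ := 2 ^ (k+1) with hddef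
      have hd1 : 1 ≤ d := Nat.one_le_two_pow
      set f : Polynomial ℤ →+* Polynomial (ZMod 2) :=
        Polynomial.mapRingHom (Int.castRingHom (ZMod 2)) with hf
      set F : Polynomial (Polynomial ℤ) →+* Polynomial (Polynomial (ZMod 2)) :=
        Polynomial.mapRingHom f with hF
      set P : Polynomial (Polynomial (Polynomial ℤ)) :=
        (Rtilde (k+1)).map (C : Polynomial ℤ →+* Polynomial (Polynomial ℤ)) with hP
      have hRdef : Rtilde (k+1+1) = _root_.resultant P g1t := rfl
      have hPdeg : P.natDegree = d := by
        rw [hP, natDegree_map_eq_of_injective Polynomial.C_injective, hdeg]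
      have hPmap : P.map F = X ^ d + C (C (X : Polynomial (ZMod 2))) := by
        rw [hP, Polynomial.map_map]
        have hcomp : (F : Polynomial (Polynomial ℤ) →+* Polynomial (Polynomial (ZMod 2))).comp
            (C : Polynomial ℤ →+* Polynomial (Polynomial ℤ))
            = (C : Polynomial (ZMod 2) →+* Polynomial (Polynomial (ZMod 2))).comp f := by
          refine RingHom.ext (fun a => ?_)
          simp [hF, Polynomial.coe_mapRingHom, Polynomial.map_C]
        rw [hcomp, ← Polynomial.map_map, hmap]
        rw [Polynomial.map_add, Polynomial.map_pow, Polynomial.map_C, Polynomial.map_X]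
      have hres : (Rtilde (k+1+1)).map f =
          (sylvesterMatrix (X ^ d + C (C (X : Polynomial (ZMod 2))))
            (X + C ((X : Polynomial (Polynomial (ZMod 2))) ^ 2)) d 2).det := by
        calc (Rtilde (k+1+1)).map f
            = F (_root_.resultant P g1t) := by rw [hRdef]; rfl
          _ = (F.mapMatrix (sylvesterMatrix P g1t P.natDegree g1t.natDegree)).det :=
              RingHom.map_det F _
          _ = (sylvesterMatrix (P.map F) (g1t.map F) P.natDegree g1t.natDegree).det := by
              rw [sylvesterMatrix_map]
          _ = _ := by rw [hPmap, hPdeg, g1t_natDegree, hF, g1t_map]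
      have hdet : (sylvesterMatrix (X ^ d + C (C (X : Polynomial (ZMod 2))))
          (X + C ((X : Polynomial (Polynomial (ZMod 2))) ^ 2)) d 2).det =
          (X : Polynomial (Polynomial (ZMod 2))) ^ (2 ^ (k+1+1)) + C (X : Polynomial (ZMod 2)) := by
        rw [syl_det d hd1]
        have hneg : ((-1 : Polynomial (Polynomial (ZMod 2)))) ^ d = 1 := by
          rw [hddef, pow_succ, mul_comm, pow_mul]
          norm_num
        have hbp : (((X : Polynomial (Polynomial (ZMod 2))) ^ 2)) ^ d = X ^ (2 ^ (k+1+1)) := by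
          rw [← pow_mul]
          congr 1
          rw [hddef]
          ring
        rw [hneg, hbp, one_mul, add_comm]
      have hmapres : (Rtilde (k+1+1)).map f =
          (X : Polynomial (Polynomial (ZMod 2))) ^ (2 ^ (k+1+1)) + C (X : Polynomial (ZMod 2)) := by
        rw [hres, hdet]
      refine ⟨?_, hmapres⟩
      -- natDegree
      apply le_antisymm
      · have hb := natDegree_det_le' (sylvesterMatrix P g1t P.natDegree g1t.natDegree)
          (fun i => if (i : ℕ) < g1t.natDegree then 0 else 2) ?ent
        case ent =>
          intro i j
          unfold sylvesterMatrix
          split_ifs with h1 h2 h3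
          · have hc : P.coeff ((j : ℕ) - (i : ℕ))
                = C ((Rtilde (k+1)).coeff ((j : ℕ) - (i : ℕ))) :=
              Polynomial.coeff_map _ _
            rw [hc]
            simp
          · simp
          · exact g1t_coeff_natDegree _
          · simp
        rw [sum_aux g1t.natDegree P.natDegree] at hb
        calc (Rtilde (k+1+1)).natDegree
            = (sylvesterMatrix P g1t P.natDegree g1t.natDegree).det.natDegree := by
              rw [hRdef]; rfl
          _ ≤ 2 * P.natDegree := hb
          _ = 2 * d := by rw [hPdeg]
          _ = 2 ^ (k+1+1) := by rw [hddef]; ring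
      · calc (2 : ℕ) ^ (k+1+1)
            = ((X : Polynomial (Polynomial (ZMod 2))) ^ (2 ^ (k+1+1))
              + C (X : Polynomial (ZMod 2))).natDegree := (natDegree_X_pow_add_C).symm
          _ = ((Rtilde (k+1+1)).map f).natDegree := by rw [hmapres]
          _ ≤ (Rtilde (k+1+1)).natDegree := natDegree_map_le

theorem stmt_8 (n : ℕ) (hn : 1 ≤ n) :
    (Rtilde n).map (Polynomial.mapRingHom (Int.castRingHom (ZMod 2))) =
      (X : Polynomial (Polynomial (ZMod 2))) ^ (2 ^ n) + C (X : Polynomial (ZMod 2)) := by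
  exact (key n hn).2
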